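/- arXiv:0903.1318 — 3 statements merged into one kernel-verified Lean document; each statement's English description precedes it below -/
import Mathlib

section
/- Every finitely generated subgroup G of GL(n, K), where K is a field of characteristic zero, such that G is contained in a finite union of conjugacy classes of finite-order elements of GL(n, K), is finite. -/
open Matrix Polynomial

lemma aux_real (t : Multiset ℝ) (h1 : ∀ x ∈ t, x ≤ 1)
    (h2 : (Multiset.card t : ℝ) ≤ t.sum) : ∀ x ∈ t, x = 1 := by
  induction t using Multiset.induction_on with
  | empty => intro x hx; simp at hx
  | cons a s ih =>
    have hs : s.sum ≤ (Multiset.card s : ℝ) := by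
      have := Multiset.sum_le_card_nsmul s 1 (fun x hx => h1 x (Multiset.mem_cons_of_mem hx))
      simpa using this
    have ha : a ≤ 1 := h1 a (Multiset.mem_cons_self a s)
    rw [Multiset.sum_cons, Multiset.card_cons] at h2
    push_cast at h2
    have ha1 : a = 1 := by linarith
    have hs2 : (Multiset.card s : ℝ) ≤ s.sum := by linarith
    intro x hx
    rcases Multiset.mem_cons.mp hx with rfl | hx
    · exact ha1
    · exact ih (fun y hy => h1 y (Multiset.mem_cons_of_mem hy)) hs2 x hx

lemma aux_complex (m : ℕ) (hm : 0 < m) (t : Multiset ℂ)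
    (hpow : ∀ z ∈ t, z ^ m = 1) (hsum : t.sum = (Multiset.card t : ℂ)) :
    ∀ z ∈ t, z = 1 := by
  have habs : ∀ z ∈ t, ‖z‖ = 1 := by
    intro z hz
    have h1 : ‖z‖ ^ m = 1 := by
      rw [← norm_pow, hpow z hz, norm_one]
    rcases lt_trichotomy ‖z‖ 1 with h | h | h
    · exact absurd h1 (by nlinarith [pow_lt_one₀ (norm_nonneg z) h hm.ne'])
    · exact h
    · exact absurd h1 (by nlinarith [one_lt_pow₀ h hm.ne'])
  have hre : ∀ z ∈ t, z.re ≤ 1 := fun z hz => (Complex.re_le_norm z).trans (habs z hz).le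
  have hresum : (t.map Complex.re).sum = (Multiset.card t : ℝ) := by
    have h := Complex.reAddGroupHom.map_multiset_sum t
    rw [hsum] at h
    simpa [Complex.coe_reAddGroupHom] using h.symm
  have hre1 : ∀ z ∈ t, z.re = 1 := by
    intro z hz
    have := aux_real (t.map Complex.re)
      (fun x hx => by
        obtain ⟨w, hw, rfl⟩ := Multiset.mem_map.mp hx
        exact hre w hw)
      (by rw [hresum]; simp)
    exact this z.re (Multiset.mem_map_of_mem _ hz)
  intro z hz
  have him : z.im = 0 := by
    have h3 : ‖z‖ ^ 2 = z.re ^ 2 + z.im ^ 2 := by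
      rw [Complex.sq_norm, Complex.normSq_apply]; ring
    rw [habs z hz, hre1 z hz] at h3
    nlinarith
  exact Complex.ext (hre1 z hz) him

lemma aux_roots_one (L : Type*) [Field L] [CharZero L] (m : ℕ) (hm : 0 < m)
    (t : Multiset L) (hpow : ∀ z ∈ t, z ^ m = 1)
    (hsum : t.sum = (Multiset.card t : L)) : ∀ z ∈ t, z = 1 := by
  classical
  set S : Set L := {x | x ∈ t} with hS
  have hint : ∀ x ∈ S, IsIntegral ℚ x := by
    intro x hx
    refine ⟨X ^ m - 1, ?_, ?_⟩
    · simpa using monic_X_pow_sub_C (1 : ℚ) hm.ne'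
    · simp [eval₂_sub, eval₂_pow, hpow x hx]
  set F := IntermediateField.adjoin ℚ S with hF
  haveI : Algebra.IsAlgebraic ℚ F := IntermediateField.isAlgebraic_adjoin hint
  let φ : F →ₐ[ℚ] ℂ := IsAlgClosed.lift
  have hmemF : ∀ x ∈ t, x ∈ F := fun x hx => IntermediateField.subset_adjoin ℚ S hx
  let t' : Multiset F := t.pmap (fun x hx => (⟨x, hx⟩ : F)) hmemF
  have hmap : t'.map (fun x : F => (x : L)) = t := by
    simp only [t', Multiset.map_pmap]
    rw [Multiset.pmap_eq_map]
    simp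
  have hcard' : Multiset.card t' = Multiset.card t := by simp [t']
  have hsum' : t'.sum = (Multiset.card t : F) := by
    apply (algebraMap F L).injective
    rw [map_multiset_sum, map_natCast]
    have h0 : Multiset.map (⇑(algebraMap F L)) t' = t := by
      rw [← hmap]
      exact Multiset.map_congr rfl (fun x _ => rfl)
    rw [h0, hsum]
  -- push to ℂ
  let u : Multiset ℂ := t'.map φ
  have hucard : Multiset.card u = Multiset.card t := by simp [u, hcard']
  have hupow : ∀ z ∈ u, z ^ m = 1 := by
    intro z hz
    obtain ⟨w, hw, rfl⟩ := Multiset.mem_map.mp hz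
    have hwL : ((w : L)) ^ m = 1 := by
      obtain ⟨x, hx, h⟩ := Multiset.mem_pmap.mp hw
      rw [← h]
      exact hpow x hx
    have hwF : w ^ m = 1 := by
      apply Subtype.ext
      push_cast
      exact hwL
    rw [← map_pow, hwF, _root_.map_one]
  have husum : u.sum = (Multiset.card u : ℂ) := by
    rw [← map_multiset_sum φ t', hsum', hucard, map_natCast]
  have := aux_complex m hm u hupow husum
  intro z hz
  have hzF : (⟨z, hmemF z hz⟩ : F) ∈ t' := by
    exact Multiset.mem_pmap.mpr ⟨z, hz, rfl⟩
  have h1 : φ ⟨z, hmemF z hz⟩ = 1 := this _ (Multiset.mem_map_of_mem φ hzF)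
  have h2 : (⟨z, hmemF z hz⟩ : F) = 1 := by
    have hinj : Function.Injective φ := φ.toRingHom.injective
    exact hinj (by rw [h1, _root_.map_one])
  exact congrArg Subtype.val h2

lemma aux_key {K : Type*} [Field K] [CharZero K] {n m : ℕ} (hm : 0 < m)
    (M : Matrix (Fin n) (Fin n) K) (hpow : M ^ m = 1)
    (htr : Matrix.trace M = (n : K)) : M = 1 := by
  classical
  rcases Nat.eq_zero_or_pos n with rfl | hn
  · ext i j; exact i.elim0
  haveI : Nonempty (Fin n) := ⟨⟨0, hn⟩⟩
  set L := AlgebraicClosure K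
  haveI : CharZero L := charZero_of_injective_algebraMap (algebraMap K L).injective
  set f : K →+* L := (algebraMap K L)
  set N : Matrix (Fin n) (Fin n) L := M.map f with hN
  have hNf : N = f.mapMatrix M := rfl
  have hNpow : N ^ m = 1 := by
    rw [hNf, ← map_pow, hpow, _root_.map_one]
  have hNtr : Matrix.trace N = (n : L) := by
    have h := AddMonoidHom.map_trace f M
    rw [htr, map_natCast] at h
    rw [hN]
    exact h.symm
  -- the characteristic polynomial
  set p := N.charpoly with hp
  have hmonic : p.Monic := N.charpoly_monic
  have hsplits : p.Splits := IsAlgClosed.splits p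
  have hdeg : p.natDegree = n := by
    rw [hp, N.charpoly_natDegree_eq_dim, Fintype.card_fin]
  have hcard : Multiset.card p.roots = n := by
    rw [splits_iff_card_roots.mp hsplits, hdeg]
  have hsumroots : p.roots.sum = (n : L) := by
    rw [← Matrix.trace_eq_sum_roots_charpoly, hNtr]
  -- every root is an m-th root of unity
  have hrootpow : ∀ z ∈ p.roots, z ^ m = 1 := by
    intro z hz
    have hroot : p.IsRoot z := (mem_roots (hmonic.ne_zero)).mp hz
    -- eval z p = det (z • 1 - N)
    have heval : p.eval z = Matrix.det (z • (1 : Matrix (Fin n) (Fin n) L) - N) := by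
      have h1 : p.eval z = (Polynomial.evalRingHom z) p := rfl
      rw [h1, hp, Matrix.charpoly, RingHom.map_det]
      congr 1
      ext i j
      simp only [RingHom.mapMatrix_apply, Matrix.map_apply]
      by_cases hij : i = j
      · subst hij
        simp [Matrix.charmatrix_apply_eq, Matrix.one_apply_eq]
      · simp [Matrix.charmatrix_apply_ne _ _ _ hij, Matrix.one_apply_ne hij]
    have hdet0 : Matrix.det (z • (1 : Matrix (Fin n) (Fin n) L) - N) = 0 := by
      rw [← heval]; exact hroot
    have hcomm : Commute (z • (1 : Matrix (Fin n) (Fin n) L)) N :=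
      (Commute.one_left N).smul_left z
    have hfac := hcomm.geom_sum₂_mul m
    have hdet : ((z • (1 : Matrix (Fin n) (Fin n) L)) ^ m - N ^ m).det = 0 := by
      rw [← hfac, Matrix.det_mul, hdet0, mul_zero]
    rw [hNpow, _root_.smul_pow, one_pow] at hdet
    have : (z ^ m • (1 : Matrix (Fin n) (Fin n) L) - 1) = (z ^ m - 1) • 1 := by
      rw [sub_smul, one_smul]
    rw [this, Matrix.det_smul, Matrix.det_one, mul_one, Fintype.card_fin] at hdet
    have := pow_eq_zero_iff hn.ne' |>.mp hdet
    exact sub_eq_zero.mp this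
  -- all roots are 1
  have hroots1 : ∀ z ∈ p.roots, z = 1 := by
    apply aux_roots_one L m hm p.roots hrootpow
    rw [hsumroots, hcard]
  -- charpoly = (X - 1)^n
  have hpfac : p = (X - Polynomial.C (1 : L)) ^ n := by
    have := hsplits.eq_prod_roots_of_monic hmonic
    rw [this]
    have hmapeq : p.roots.map (fun a => X - Polynomial.C a)
        = Multiset.replicate n (X - Polynomial.C (1 : L)) := by
      apply Multiset.eq_replicate.mpr
      constructor
      · rw [Multiset.card_map, hcard]
      · intro q hq
        obtain ⟨z, hz, rfl⟩ := Multiset.mem_map.mp hq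
        rw [hroots1 z hz]
    rw [hmapeq, Multiset.prod_replicate]
  -- minpoly considerations
  have hint : IsIntegral L N := Algebra.IsIntegral.isIntegral N
  set q := minpoly L N with hq
  have hqmonic : q.Monic := minpoly.monic hint
  have hq_dvd_pow : q ∣ (X - Polynomial.C (1 : L)) ^ n := by
    rw [← hpfac]; exact N.minpoly_dvd_charpoly
  have hq_dvd_cyc : q ∣ X ^ m - 1 := by
    apply minpoly.dvd
    rw [map_sub, map_pow, aeval_X, _root_.map_one, hNpow, sub_self]
  have hsq : Squarefree q := by
    have hsep : (X ^ m - 1 : L[X]).Separable := by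
      have := Polynomial.separable_X_pow_sub_C (n := m) (1 : L)
        (by exact_mod_cast Nat.cast_ne_zero.mpr hm.ne') one_ne_zero
      simpa using this
    exact hsep.squarefree.squarefree_of_dvd hq_dvd_cyc
  have hprime : Prime (X - Polynomial.C (1 : L)) := by
    exact Polynomial.prime_X_sub_C 1
  obtain ⟨i, hi, hassoc⟩ := (dvd_prime_pow hprime n).mp hq_dvd_pow
  have hdegq : 0 < q.natDegree := minpoly.natDegree_pos hint
  have hieq : i = 1 := by
    rcases Nat.lt_or_ge i 1 with h | h
    · interval_cases i
      exfalso
      have : IsUnit q := by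
        rw [pow_zero] at hassoc
        exact associated_one_iff_isUnit.mp hassoc
      have := Polynomial.natDegree_eq_zero_of_isUnit this
      omega
    rcases Nat.lt_or_ge i 2 with h2 | h2
    · omega
    exfalso
    have hdvd2 : (X - Polynomial.C (1 : L)) * (X - Polynomial.C (1 : L)) ∣ q := by
      have : (X - Polynomial.C (1 : L)) ^ 2 ∣ (X - Polynomial.C (1 : L)) ^ i :=
        pow_dvd_pow _ h2
      calc (X - Polynomial.C (1 : L)) * (X - Polynomial.C (1 : L))
          = (X - Polynomial.C (1 : L)) ^ 2 := by ring
        _ ∣ (X - Polynomial.C (1 : L)) ^ i := this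
        _ ∣ q := hassoc.symm.dvd
    exact (Polynomial.not_isUnit_X_sub_C (1 : L)) (hsq _ hdvd2)
  have hqeq : q = X - Polynomial.C (1 : L) := by
    subst hieq
    rw [pow_one] at hassoc
    exact Polynomial.eq_of_monic_of_associated hqmonic (monic_X_sub_C 1) hassoc
  have hN1 : N = 1 := by
    have := minpoly.aeval L N
    rw [← hq, hqeq, map_sub, aeval_X, aeval_C, _root_.map_one] at this
    exact sub_eq_zero.mp this
  -- descend to K
  ext i j
  apply f.injective
  have h1 : N i j = (1 : Matrix (Fin n) (Fin n) L) i j := by rw [hN1]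
  have h2 : N i j = f (M i j) := rfl
  rw [h2] at h1
  rw [h1]
  by_cases hij : i = j
  · subst hij; simp [Matrix.one_apply_eq]
  · simp [Matrix.one_apply_ne hij]

/-- A finitely generated subgroup of `GL(n, K)`, `char K = 0`, contained in
finitely many conjugacy classes of finite-order elements, is finite. -/
theorem stmt_7 (K : Type*) [Field K] [CharZero K] (n : ℕ)
    (G : Subgroup (GL (Fin n) K)) (hfg : G.FG)
    (C : Finset (GL (Fin n) K)) (hord : ∀ A ∈ C, IsOfFinOrder A)
    (hcov : ∀ g ∈ G, ∃ A ∈ C, IsConj A g) :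
    Finite G := by
  classical
  set m : ℕ := ∏ A ∈ C, orderOf A with hmdef
  have hm : 0 < m := Finset.prod_pos (fun A hA => (hord A hA).orderOf_pos)
  have horder : ∀ u : GL (Fin n) K, u ∈ G → u ^ m = 1 := by
    intro u hu
    obtain ⟨A, hA, hconj⟩ := hcov u hu
    obtain ⟨c, hc⟩ := hconj
    have h1 : orderOf A = orderOf u := hc.orderOf_eq
    have h2 : orderOf A ∣ m := Finset.dvd_prod_of_mem _ hA
    rw [h1] at h2
    exact orderOf_dvd_iff_pow_eq_one.mp h2
  set T : Finset K := C.image (fun A => Matrix.trace A.val) with hT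
  have htrmem : ∀ u : GL (Fin n) K, u ∈ G → Matrix.trace u.val ∈ T := by
    intro u hu
    obtain ⟨A, hA, hconj⟩ := hcov u hu
    obtain ⟨c, hc⟩ := hconj
    set d : GL (Fin n) K := (c : GL (Fin n) K) with hd
    have h1 : u = d * A * d⁻¹ := eq_mul_inv_iff_mul_eq.mpr hc.eq.symm
    have htr : Matrix.trace u.val = Matrix.trace A.val := by
      rw [h1, Units.val_mul, Units.val_mul, Matrix.trace_mul_cycle, ← Units.val_mul,
        inv_mul_cancel, Units.val_one, Matrix.one_mul]
    rw [htr]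
    exact Finset.mem_image_of_mem _ hA
  set S : Set (Matrix (Fin n) (Fin n) K) :=
    (fun g : GL (Fin n) K => g.val) '' (G : Set (GL (Fin n) K)) with hS
  set V : Submodule K (Matrix (Fin n) (Fin n) K) := Submodule.span K S with hV
  have hVfg : V.FG := IsNoetherian.noetherian V
  have hVcompact : IsCompactElement V := (Submodule.fg_iff_compact V).mp hVfg
  have hle : V ≤ ⨆ x : S, Submodule.span K {(x : Matrix (Fin n) (Fin n) K)} := by
    rw [hV, Submodule.span_eq_iSup_of_singleton_spans, iSup_subtype]
  obtain ⟨s, hs⟩ := CompleteLattice.IsCompactElement.exists_finset_of_le_iSup _ hVcompact _ hle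
  have hspan : V ≤ Submodule.span K (Subtype.val '' (s : Set S)) := by
    refine hs.trans ?_
    apply iSup_le; intro x
    apply iSup_le; intro hx
    apply Submodule.span_mono
    intro y hy
    rcases Set.mem_singleton_iff.mp hy with rfl
    exact ⟨x, hx, rfl⟩
  have hrep : ∀ x : S, ∃ h : GL (Fin n) K, h ∈ G ∧ h.val = (x : Matrix (Fin n) (Fin n) K) := by
    rintro ⟨x, hg⟩
    obtain ⟨h, hh, rfl⟩ := hg
    exact ⟨h, hh, rfl⟩
  choose rep hrepG hrepval using hrep
  let F : G → ({x : ↑S // x ∈ s} → ↥T) := fun g x =>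
    ⟨Matrix.trace ((g : GL (Fin n) K).val * ((x.1 : S) : Matrix (Fin n) (Fin n) K)), by
      have hmem : (g : GL (Fin n) K) * rep x.1 ∈ G := mul_mem g.2 (hrepG x.1)
      have h0 := htrmem _ hmem
      rw [Units.val_mul, hrepval x.1] at h0
      exact h0⟩
  have hinj : Function.Injective F := by
    intro g g' hFg
    have heq : ∀ x : S, x ∈ s →
        Matrix.trace ((g : GL (Fin n) K).val * (x : Matrix (Fin n) (Fin n) K))
        = Matrix.trace ((g' : GL (Fin n) K).val * (x : Matrix (Fin n) (Fin n) K)) := by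
      intro x hx
      have := congrFun hFg ⟨x, hx⟩
      exact Subtype.ext_iff.mp this
    set gv := (g : GL (Fin n) K).val with hgv
    set gv' := (g' : GL (Fin n) K).val with hgv'
    set Λ : Matrix (Fin n) (Fin n) K →ₗ[K] K :=
      (Matrix.traceLinearMap (Fin n) K K).comp (LinearMap.mulLeft K (gv - gv')) with hΛ
    have hker : Submodule.span K (Subtype.val '' (s : Set S)) ≤ LinearMap.ker Λ := by
      rw [Submodule.span_le]
      rintro y ⟨x, hx, rfl⟩
      simp only [SetLike.mem_coe, LinearMap.mem_ker, hΛ, LinearMap.comp_apply,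
        LinearMap.mulLeft_apply, Matrix.traceLinearMap_apply]
      rw [Matrix.sub_mul, Matrix.trace_sub, heq x hx, sub_self]
    set w : GL (Fin n) K := ((g' : GL (Fin n) K))⁻¹ with hw
    have hginv : w ∈ G := inv_mem g'.2
    have hmemS : w.val ∈ S := ⟨w, hginv, rfl⟩
    have hmemV : w.val ∈ V := Submodule.subset_span hmemS
    have hker2 : Λ w.val = 0 := hker (hspan hmemV)
    simp only [hΛ, LinearMap.comp_apply, LinearMap.mulLeft_apply,
      Matrix.traceLinearMap_apply] at hker2
    rw [Matrix.sub_mul, Matrix.trace_sub, sub_eq_zero] at hker2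
    have h2 : gv' * w.val = 1 := by
      rw [hgv', hw, ← Units.val_mul, mul_inv_cancel, Units.val_one]
    rw [h2, Matrix.trace_one] at hker2
    set u : GL (Fin n) K := (g : GL (Fin n) K) * w with hu
    have huG : u ∈ G := mul_mem g.2 hginv
    have hupow : u.val ^ m = 1 := by
      have h3 := congrArg Units.val (horder u huG)
      simpa [Units.val_pow_eq_pow_val] using h3
    have hutr : Matrix.trace u.val = (n : K) := by
      rw [hu, Units.val_mul, hker2, Fintype.card_fin]
    have hu1 : u.val = 1 := aux_key hm _ hupow hutr
    have hu1' : u = 1 := Units.ext hu1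
    have h4 : (g : GL (Fin n) K) = (g' : GL (Fin n) K) := by
      rw [hu, hw] at hu1'
      exact mul_inv_eq_one.mp hu1'
    exact Subtype.ext h4
  exact Finite.of_injective F hinj
end

section
/- Let G be a non-abelian finite p-group with center Z of order p^l. Then there exists an element g ∈ G \ Z with g^p ∈ Z and gZ central in G/Z, and the map h ↦ [h, g] = hgh^{-1}g^{-1} defines a group homomorphism from G to Z whose kernel K has order at least |G| / p^l and whose center contains the subgroup generated by Z and g. -/
/-- In a non-abelian finite `p`-group `G` with center `Z` of order `p^l`, there is
`g ∉ Z` with `g^p ∈ Z` and `gZ` central in `G/Z`, such that `h ↦ [h,g] = hgh⁻¹g⁻¹`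
is a homomorphism `G → Z` whose kernel `K` has order at least `|G|/p^l` and whose
center contains `⟨Z, g⟩`. -/
theorem stmt_10 (G : Type*) [Group G] [Finite G] (p l : ℕ) (hp : p.Prime)
    (hG : IsPGroup p G) (hna : ¬ ∀ a b : G, a * b = b * a)
    (hZ : Nat.card (Subgroup.center G) = p ^ l) :
    ∃ g : G, g ∉ Subgroup.center G ∧ g ^ p ∈ Subgroup.center G ∧
      (∀ h : G, h * g * h⁻¹ * g⁻¹ ∈ Subgroup.center G) ∧
      ∃ φ : G →* G, (∀ h : G, φ h = h * g * h⁻¹ * g⁻¹) ∧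
        Nat.card G ≤ Nat.card φ.ker * p ^ l ∧
        ∀ x ∈ Subgroup.center G ⊔ Subgroup.closure {g},
          x ∈ φ.ker ∧ ∀ h ∈ φ.ker, x * h = h * x := by
  haveI : Fact p.Prime := ⟨hp⟩
  set Z := Subgroup.center G with hZdef
  let Q := G ⧸ Z
  haveI : Nontrivial Q := by
    by_contra hQ
    rw [not_nontrivial_iff_subsingleton] at hQ
    apply hna
    intro a b
    have ha : a ∈ Z := (QuotientGroup.eq_one_iff a).mp (Subsingleton.elim _ _)
    exact (Subgroup.mem_center_iff.mp ha b).symm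
  have hQp : IsPGroup p Q := hG.to_quotient Z
  haveI : Nontrivial (Subgroup.center Q) := hQp.center_nontrivial
  have hcQp : IsPGroup p (Subgroup.center Q) := hQp.to_subgroup _
  have hdvd : p ∣ Nat.card (Subgroup.center Q) := by
    obtain ⟨n, hn0, hn⟩ := hcQp.nontrivial_iff_card.mp inferInstance
    exact hn ▸ dvd_pow_self p hn0.ne'
  obtain ⟨z, hz⟩ := exists_prime_orderOf_dvd_card' (G := Subgroup.center Q) p hdvd
  have hzord : orderOf (z : Q) = p := (Subgroup.orderOf_coe z).trans hz
  obtain ⟨g, hg⟩ := QuotientGroup.mk_surjective (z : Q)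
  have hgne : g ∉ Z := by
    intro hgZ
    have : (z : Q) = 1 := hg ▸ (QuotientGroup.eq_one_iff g).mpr hgZ
    rw [this, orderOf_one] at hzord
    exact hp.one_lt.ne' hzord.symm
  have hzc : ∀ q : Q, q * (z : Q) = (z : Q) * q := fun q =>
    Subgroup.mem_center_iff.mp z.2 q
  have key : ∀ h : G, h * g * h⁻¹ * g⁻¹ ∈ Z := by
    intro h
    rw [← QuotientGroup.eq_one_iff]
    have : ((h * g * h⁻¹ * g⁻¹ : G) : Q)
        = (h : Q) * (z : Q) * (h : Q)⁻¹ * (z : Q)⁻¹ := by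
      rw [← hg]; simp [QuotientGroup.mk_mul, QuotientGroup.mk_inv]
    rw [this, hzc (h : Q)]
    group
  refine ⟨g, hgne, ?_, key, ?_⟩
  · rw [← QuotientGroup.eq_one_iff]
    have : ((g ^ p : G) : Q) = (z : Q) ^ p := by rw [← hg]; simp [QuotientGroup.mk_pow]
    rw [this, ← hzord, pow_orderOf_eq_one]
  · let φ : G →* G := MonoidHom.mk' (fun h => h * g * h⁻¹ * g⁻¹) (by
        intro a b
        have hcomm1 : a * (b * g * b⁻¹ * g⁻¹) = (b * g * b⁻¹ * g⁻¹) * a :=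
          Subgroup.mem_center_iff.mp (key b) a
        calc (a * b) * g * (a * b)⁻¹ * g⁻¹
            = a * (b * g * b⁻¹ * g⁻¹) * (g * a⁻¹ * g⁻¹) := by group
          _ = (b * g * b⁻¹ * g⁻¹) * a * (g * a⁻¹ * g⁻¹) := by rw [hcomm1]
          _ = (b * g * b⁻¹ * g⁻¹) * (a * g * a⁻¹ * g⁻¹) := by group
          _ = (a * g * a⁻¹ * g⁻¹) * (b * g * b⁻¹ * g⁻¹) :=
            (Subgroup.mem_center_iff.mp (key b) _).symm)
    have hker : ∀ x : G, x ∈ φ.ker ↔ x * g = g * x := by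
      intro x
      rw [MonoidHom.mem_ker]
      show x * g * x⁻¹ * g⁻¹ = 1 ↔ _
      open scoped commutatorElement in
      rw [show x * g * x⁻¹ * g⁻¹ = ⁅x, g⁆ from rfl,
        commutatorElement_eq_one_iff_commute]
      exact Iff.rfl
    refine ⟨φ, fun h => rfl, ?_, ?_⟩
    · have hrange : φ.range ≤ Z := by
        rintro _ ⟨h, rfl⟩; exact key h
      have h1 : Nat.card G = Nat.card (G ⧸ φ.ker) * Nat.card φ.ker :=
        Subgroup.card_eq_card_quotient_mul_card_subgroup φ.ker
      have h2 : Nat.card (G ⧸ φ.ker) = Nat.card φ.range :=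
        Nat.card_congr (QuotientGroup.quotientKerEquivRange φ).toEquiv
      have h3 : Nat.card φ.range ≤ Nat.card Z := Subgroup.card_le_of_le hrange
      calc Nat.card G = Nat.card φ.range * Nat.card φ.ker := by rw [h1, h2]
        _ ≤ p ^ l * Nat.card φ.ker := Nat.mul_le_mul_right _ (hZ ▸ h3)
        _ = Nat.card φ.ker * p ^ l := mul_comm _ _
    · have hsub : Z ⊔ Subgroup.closure {g}
          ≤ φ.ker ⊓ Subgroup.centralizer (φ.ker : Set G) := by
        apply sup_le
        · apply le_inf
          · intro x hx
            exact (hker x).mpr (Subgroup.mem_center_iff.mp hx g).symm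
          · exact Subgroup.center_le_centralizer _
        · rw [Subgroup.closure_le, Set.singleton_subset_iff]
          exact ⟨(hker g).mpr rfl,
            Subgroup.mem_centralizer_iff.mpr fun h hh => (hker h).mp hh⟩
      intro x hx
      obtain ⟨h1, h2⟩ := Subgroup.mem_inf.mp (hsub hx)
      exact ⟨h1, fun h hh => (Subgroup.mem_centralizer_iff.mp h2 h hh).symm⟩
end

section
/- Let k be a field and d ≥ 1. For any nonzero homogeneous polynomial r(x, y) of degree d + 1 over k whose x^{d+1} coefficient and y^{d+1} coefficient are both nonzero, there exist homogeneous polynomials p, q of degree d with no common root in P^1 over the algebraic closure of k such that p(x,y)·y - q(x,y)·x = r(x,y). -/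
open MvPolynomial

private lemma weight_fin2 (m : Fin 2 →₀ ℕ) :
    (Finsupp.weight (1 : Fin 2 → ℕ)) m = m 0 + m 1 := by
  rw [Finsupp.weight_apply, Finsupp.sum_fintype]
  · simp [Fin.sum_univ_two]
  · intro i; simp

private lemma fin2_cases {i j : Fin 2} (hij : i ≠ j) :
    (i = 0 ∧ j = 1) ∨ (i = 1 ∧ j = 0) := by
  have hi := i.isLt
  have hj := j.isLt
  rw [Ne, Fin.ext_iff] at hij
  simp only [Fin.ext_iff, Fin.val_zero, Fin.val_one]
  omega

private lemma eq_single_of_apply_eq_zero {m : Fin 2 →₀ ℕ} {i j : Fin 2} (hij : i ≠ j)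
    (h : m j = 0) : m = Finsupp.single i (m i) := by
  ext a
  have hall : a = i ∨ a = j := by
    rcases fin2_cases hij with ⟨rfl, rfl⟩ | ⟨rfl, rfl⟩ <;> fin_cases a <;> simp
  rcases hall with rfl | rfl
  · simp [Finsupp.single_eq_same]
  · rw [h, Finsupp.single_eq_of_ne' (fun hc => hij hc)]

/-- Key divisibility lemma: a binary form of degree `n+1` minus its `X i ^ (n+1)` term
is divisible by `X j`, with quotient homogeneous of degree `n`. -/
private lemma key_div {k : Type*} [Field k] (n : ℕ) (r : MvPolynomial (Fin 2) k)
    (hr : r.IsHomogeneous (n + 1)) (i j : Fin 2) (hij : i ≠ j) :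
    ∃ p : MvPolynomial (Fin 2) k, p.IsHomogeneous n ∧
      X j * p = r - C (MvPolynomial.coeff (Finsupp.single i (n + 1)) r) * X i ^ (n + 1) := by
  classical
  set c := MvPolynomial.coeff (Finsupp.single i (n + 1)) r with hc
  set r' := r - C c * X i ^ (n + 1) with hr'def
  have hr' : r'.IsHomogeneous (n + 1) :=
    hr.sub ((isHomogeneous_X_pow i (n + 1)).C_mul c)
  have hweight : ∀ ⦃m : Fin 2 →₀ ℕ⦄, MvPolynomial.coeff m r' ≠ 0 →
      (Finsupp.weight (1 : Fin 2 → ℕ)) m = n + 1 := hr'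
  have hzero : ∀ m : Fin 2 →₀ ℕ, m j = 0 → MvPolynomial.coeff m r' = 0 := by
    intro m hmj
    by_cases hm : m = Finsupp.single i (n + 1)
    · subst hm
      simp [hr'def, coeff_X_pow, hc]
    · rw [hr'def, coeff_sub, coeff_C_mul, coeff_X_pow, if_neg (fun h => hm h.symm)]
      simp only [mul_zero, sub_zero]
      by_contra hcm
      have hw := hr hcm
      rw [weight_fin2] at hw
      have hmeq := eq_single_of_apply_eq_zero hij hmj
      have hmi : m i = n + 1 := by
        rcases fin2_cases hij with ⟨rfl, rfl⟩ | ⟨rfl, rfl⟩ <;> omega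
      exact hm (hmi ▸ hmeq)
  refine ⟨r'.divMonomial (Finsupp.single j 1), ?_, ?_⟩
  · intro m hm
    rw [coeff_divMonomial] at hm
    have hw := hweight hm
    have h1 : (Finsupp.weight (1 : Fin 2 → ℕ)) (Finsupp.single j 1) = 1 := by
      rw [Finsupp.weight_apply, Finsupp.sum_single_index] <;> simp
    rw [map_add, h1] at hw
    omega
  · have hmod : r'.modMonomial (Finsupp.single j 1) = 0 := by
      ext m
      by_cases hle : Finsupp.single j 1 ≤ m
      · rw [coeff_modMonomial_of_le _ hle, coeff_zero]
      · rw [coeff_modMonomial_of_not_le _ hle, coeff_zero]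
        apply hzero
        rw [Finsupp.single_le_iff] at hle
        omega
    have h := divMonomial_add_modMonomial r' (Finsupp.single j 1)
    rw [hmod, add_zero] at h
    exact h

/-- Evaluating a binary form at a point where the `j`-th coordinate is zero picks out
the `X i ^ (n+1)` coefficient. -/
private lemma aeval_eq {k : Type*} [Field k] (n : ℕ) (r : MvPolynomial (Fin 2) k)
    (hr : r.IsHomogeneous (n + 1)) (v : Fin 2 → AlgebraicClosure k) (i j : Fin 2)
    (hij : i ≠ j) (hvj : v j = 0) :
    (MvPolynomial.aeval v) r =
      algebraMap k (AlgebraicClosure k) (MvPolynomial.coeff (Finsupp.single i (n + 1)) r)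
        * v i ^ (n + 1) := by
  obtain ⟨p, hp, hpeq⟩ := key_div n r hr i j hij
  have hthis : r = X j * p + C (MvPolynomial.coeff (Finsupp.single i (n + 1)) r)
      * X i ^ (n + 1) := by
    rw [eq_comm, hpeq]; ring
  have h2 := congrArg (MvPolynomial.aeval v) hthis
  rw [map_add, map_mul, map_mul, aeval_X, hvj, zero_mul, zero_add, aeval_C, map_pow,
    aeval_X] at h2
  exact h2

/-- Surjectivity of the fixed-point map: given a nonzero binary form `r` of degree
`d + 1` over `k` whose `x^{d+1}` and `y^{d+1}` coefficients are both nonzero, there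
are degree-`d` forms `p, q` with no common nonzero root over the algebraic closure
such that `p·y - q·x = r`. -/
theorem stmt_12 (k : Type*) [Field k] (d : ℕ) (hd : 1 ≤ d)
    (r : MvPolynomial (Fin 2) k) (hr : r.IsHomogeneous (d + 1)) (hr0 : r ≠ 0)
    (hx : MvPolynomial.coeff (Finsupp.single (0 : Fin 2) (d + 1)) r ≠ 0)
    (hy : MvPolynomial.coeff (Finsupp.single (1 : Fin 2) (d + 1)) r ≠ 0) :
    ∃ p q : MvPolynomial (Fin 2) k, p.IsHomogeneous d ∧ q.IsHomogeneous d ∧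
      (∀ x y : AlgebraicClosure k,
        (MvPolynomial.aeval ![x, y]) p = 0 → (MvPolynomial.aeval ![x, y]) q = 0 →
          x = 0 ∧ y = 0) ∧
      p * X 1 - q * X 0 = r := by
  classical
  set c := MvPolynomial.coeff (Finsupp.single (0 : Fin 2) (d + 1)) r with hc
  obtain ⟨p, hp, hpeq⟩ := key_div d r hr 0 1 (by decide)
  refine ⟨p, -(C c * X 0 ^ d), hp, ?_, ?_, ?_⟩
  · exact (((isHomogeneous_X_pow (0 : Fin 2) d).C_mul c).neg)
  · intro x y hpx hqx
    have hcne : algebraMap k (AlgebraicClosure k) c ≠ 0 := by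
      simpa using hx
    have hxz : x = 0 := by
      have h : algebraMap k (AlgebraicClosure k) c * x ^ d = 0 := by
        rw [map_neg, neg_eq_zero, map_mul, aeval_C, map_pow, aeval_X] at hqx
        simpa only [Matrix.cons_val_zero] using hqx
      rcases mul_eq_zero.mp h with h | h
      · exact absurd h hcne
      · exact pow_eq_zero_iff (show d ≠ 0 by omega) |>.mp h
    refine ⟨hxz, ?_⟩
    -- evaluate r at (0, y)
    have hrv : (MvPolynomial.aeval ![x, y]) r =
        algebraMap k (AlgebraicClosure k)
          (MvPolynomial.coeff (Finsupp.single (1 : Fin 2) (d + 1)) r) * y ^ (d + 1) := by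
      apply aeval_eq d r hr ![x, y] 1 0 (by decide)
      simpa using hxz
    -- but also r = p * X 1 - q * X 0 evaluated is 0
    have heq : p * X 1 - -(C c * X 0 ^ d) * X 0 = r := by
      have h : X (1 : Fin 2) * p = r - C c * X 0 ^ (d + 1) := hpeq
      rw [neg_mul, sub_neg_eq_add, mul_comm p (X 1), h]
      ring
    have hr0' : (MvPolynomial.aeval ![x, y]) r = 0 := by
      rw [← heq, map_sub, map_mul, map_mul, hpx, hqx, zero_mul, zero_mul, sub_zero]
    rw [hrv] at hr0'
    rcases mul_eq_zero.mp hr0' with h | h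
    · exact absurd h (by simpa using hy)
    · exact pow_eq_zero_iff (show d + 1 ≠ 0 by omega) |>.mp h
  · have h : X (1 : Fin 2) * p = r - C c * X 0 ^ (d + 1) := hpeq
    rw [neg_mul, sub_neg_eq_add, mul_comm p (X 1), h]
    ring
end
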